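/- Let X be a multiplicative prestreak and a, b, c, d ∈ X. (1) If a # b and c # d then a·d + b·c # a·c + b·d. (2) If moreover X is archimedean, the converse holds: a·d + b·c # a·c + b·d implies a # b and c # d. -/
import Mathlib


/-- A prestreak: a strict order (asymmetric and cotransitive) together with a
commutative additive monoid structure and a commutative multiplicative monoid
structure on the positive part, compatible with the order.  (The intrinsic
topology conditions of the paper are omitted, being vacuous in the classical
set-theoretic setting.) -/
structure Prestreak (X : Type*) where
  lt : X → X → Prop
  add : X → X → X
  zero : X
  mul : X → X → X
  one : X
  lt_asymm : ∀ a b, ¬ (lt a b ∧ lt b a)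
  lt_cotrans : ∀ a b x, lt a b → lt a x ∨ lt x b
  add_comm : ∀ a b, add a b = add b a
  add_assoc : ∀ a b c, add (add a b) c = add a (add b c)
  add_zero : ∀ a, add a zero = a
  zero_lt_one : lt zero one
  mul_pos : ∀ a b, lt zero a → lt zero b → lt zero (mul a b)
  mul_comm : ∀ a b, lt zero a → lt zero b → mul a b = mul b a
  mul_assoc : ∀ a b c, lt zero a → lt zero b → lt zero c →
    mul (mul a b) c = mul a (mul b c)
  mul_one : ∀ a, lt zero a → mul a one = a
  mul_add : ∀ a b c, lt zero a → lt zero b → lt zero c →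
    mul (add a b) c = add (mul a c) (mul b c)
  add_lt_add_iff : ∀ a b x, (lt (add a x) (add b x) ↔ lt a b)
  mul_lt_mul_iff : ∀ a b x, lt zero a → lt zero b → lt zero x →
    (lt (mul a x) (mul b x) ↔ lt a b)

namespace Prestreak

variable {X : Type*}

/-- Multiplication by a natural number: `0·a = 0`, `(n+1)·a = n·a + a`. -/
def nsmul (P : Prestreak X) : ℕ → X → X
  | 0, _ => P.zero
  | n + 1, a => P.add (nsmul P n a) a

/-- The canonical image of a natural number, `n ↦ n·1`. -/
def ofNat (P : Prestreak X) (n : ℕ) : X := P.nsmul n P.one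

/-- Comparison `x < q` of an element of a prestreak with a rational number,
using the canonical representation `q = (q.num⁺ − q.num⁻)/q.den`:
`x < (a−b)/c  :=  c·x + b < a`. -/
def ltQ (P : Prestreak X) (x : X) (q : ℚ) : Prop :=
  P.lt (P.add (P.nsmul q.den x) (P.ofNat ((-q.num).toNat))) (P.ofNat q.num.toNat)

/-- Comparison `q < x` of a rational with an element of a prestreak:
`(a−b)/c < x  :=  a < c·x + b`. -/
def qLt (P : Prestreak X) (q : ℚ) (x : X) : Prop :=
  P.lt (P.ofNat q.num.toNat) (P.add (P.nsmul q.den x) (P.ofNat ((-q.num).toNat)))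

/-- The archimedean property for prestreaks. -/
def Archimedean (P : Prestreak X) : Prop :=
  ∀ a b c d : X, P.lt b d →
    ∃ n : ℕ, P.lt (P.add a (P.nsmul n b)) (P.add c (P.nsmul n d))

/-- Tightness: antisymmetry of `≤` (where `a ≤ b := ¬ b < a`).
A streak is a tight archimedean prestreak. -/
def Tight (P : Prestreak X) : Prop :=
  ∀ a b : X, ¬ P.lt a b → ¬ P.lt b a → a = b

/-- The apartness relation `a # b := a < b ∨ b < a`. -/
def Apart (P : Prestreak X) (a b : X) : Prop := P.lt a b ∨ P.lt b a

/-- A morphism of prestreaks: preserves `<`, `+`, `0`, `1` and products of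
positive elements. -/
def IsHom {Y : Type*} (P : Prestreak X) (Q : Prestreak Y) (f : X → Y) : Prop :=
  (∀ a b, P.lt a b → Q.lt (f a) (f b)) ∧
  (∀ a b, f (P.add a b) = Q.add (f a) (f b)) ∧
  f P.zero = Q.zero ∧ f P.one = Q.one ∧
  (∀ a b, P.lt P.zero a → P.lt P.zero b → f (P.mul a b) = Q.mul (f a) (f b))

/-- A multiplicative structure on a prestreak: a total multiplication which is
commutative, associative, distributes over addition, has unit `1`, restricts to
the given multiplication on positive elements, and satisfies the multiplicity
condition. -/
def IsMultiplicative (P : Prestreak X) (tmul : X → X → X) : Prop :=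
  (∀ a b, tmul a b = tmul b a) ∧
  (∀ a b c, tmul (tmul a b) c = tmul a (tmul b c)) ∧
  (∀ a b c, tmul (P.add a b) c = P.add (tmul a c) (tmul b c)) ∧
  (∀ a, tmul a P.one = a) ∧
  (∀ a b, P.lt P.zero a → P.lt P.zero b → tmul a b = P.mul a b) ∧
  (∀ a b c d, P.lt b a → P.lt d c →
    P.lt (P.add (tmul a d) (tmul b c)) (P.add (tmul a c) (tmul b d)))

end Prestreak


section Aux
variable {X : Type*} (P : Prestreak X)

lemma ps_zero_add (a : X) : P.add P.zero a = a := by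
  rw [P.add_comm]; exact P.add_zero a

lemma ps_asymm {a b : X} (h : P.lt a b) : ¬ P.lt b a :=
  fun h' => P.lt_asymm a b ⟨h, h'⟩

lemma ps_lt_trans {a b c : X} (h1 : P.lt a b) (h2 : P.lt b c) : P.lt a c :=
  (P.lt_cotrans a b c h1).resolve_right (ps_asymm P h2)

lemma ps_lt_ac {x y x' y' : X} (h : P.lt x y) (e1 : x' = x) (e2 : y' = y) :
    P.lt x' y' := by rw [e1, e2]; exact h

lemma ps_add_lt_right {x y : X} (h : P.lt x y) (z : X) :
    P.lt (P.add x z) (P.add y z) := (P.add_lt_add_iff x y z).mpr h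

lemma ps_lt_add_one (x : X) : P.lt x (P.add x P.one) := by
  have h := (P.add_lt_add_iff P.zero P.one x).mpr P.zero_lt_one
  rwa [ps_zero_add P x, P.add_comm P.one x] at h

lemma ps_lt_succ {x y : X} (h : ¬ P.lt x y) : P.lt y (P.add x P.one) :=
  (P.lt_cotrans x (P.add x P.one) y (ps_lt_add_one P x)).resolve_left h

lemma ps_add_lt_cases {a b c d : X} (h : P.lt (P.add a c) (P.add b d)) :
    P.lt a b ∨ P.lt c d := by
  rcases P.lt_cotrans _ _ (P.add b c) h with h' | h'
  · exact Or.inl ((P.add_lt_add_iff a b c).mp h')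
  · rw [P.add_comm b c, P.add_comm b d] at h'
    exact Or.inr ((P.add_lt_add_iff c d b).mp h')

lemma ps_nsmul_not_lt {a b : X} (h : ¬ P.lt a b) (n : ℕ) :
    ¬ P.lt (P.nsmul n a) (P.nsmul n b) := by
  induction n with
  | zero => exact fun h' => P.lt_asymm _ _ ⟨h', h'⟩
  | succ n ih =>
      intro h'
      simp only [Prestreak.nsmul] at h'
      rcases ps_add_lt_cases P h' with h'' | h''
      exacts [ih h'', h h'']

lemma ps_nsmul_add (n : ℕ) (a b : X) :
    P.nsmul n (P.add a b) = P.add (P.nsmul n a) (P.nsmul n b) := by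
  letI : Std.Associative P.add := ⟨P.add_assoc⟩
  letI : Std.Commutative P.add := ⟨P.add_comm⟩
  induction n with
  | zero => simp only [Prestreak.nsmul]; rw [P.add_zero]
  | succ n ih => simp only [Prestreak.nsmul, ih]; ac_rfl

variable {tmul : X → X → X}

lemma ps_tmul_one_left (hM : P.IsMultiplicative tmul) (y : X) : tmul P.one y = y := by
  rw [hM.1]; exact hM.2.2.2.1 y

lemma ps_tmul_add_right (hM : P.IsMultiplicative tmul) (x y z : X) :
    tmul x (P.add y z) = P.add (tmul x y) (tmul x z) := by
  rw [hM.1, hM.2.2.1, hM.1 y x, hM.1 z x]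

lemma ps_tmul_nsmul_left (hM : P.IsMultiplicative tmul) (n : ℕ) (x y : X) :
    tmul (P.nsmul n x) y = P.add (tmul P.zero y) (P.nsmul n (tmul x y)) := by
  induction n with
  | zero => simp only [Prestreak.nsmul]; rw [P.add_zero]
  | succ n ih =>
      simp only [Prestreak.nsmul, hM.2.2.1, ih]
      rw [P.add_assoc]

lemma ps_tmul_nsmul_right (hM : P.IsMultiplicative tmul) (n : ℕ) (x y : X) :
    tmul x (P.nsmul n y) = P.add (tmul x P.zero) (P.nsmul n (tmul x y)) := by
  rw [hM.1 x (P.nsmul n y), ps_tmul_nsmul_left P hM n y x, hM.1 P.zero x, hM.1 y x]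

lemma ps_key (hM : P.IsMultiplicative tmul) (hA : P.Archimedean) {a b : X}
    (hab : ¬ P.lt a b) (hba : ¬ P.lt b a) (c d : X) :
    ¬ P.lt (P.add (tmul a d) (tmul b c)) (P.add (tmul a c) (tmul b d)) := by
  letI : Std.Associative P.add := ⟨P.add_assoc⟩
  letI : Std.Commutative P.add := ⟨P.add_comm⟩
  intro hpq
  by_cases hcd : P.lt c d
  · obtain ⟨n, harch⟩ := hA d (P.add (tmul a d) (tmul b c)) c
      (P.add (tmul a c) (tmul b d)) hpq
    simp only [ps_nsmul_add] at harch
    have h1 : P.lt (P.nsmul n b) (P.add (P.nsmul n a) P.one) :=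
      ps_lt_succ P (ps_nsmul_not_lt P hab n)
    have hm := hM.2.2.2.2.2 (P.add (P.nsmul n a) P.one) (P.nsmul n b) d c h1 hcd
    simp only [hM.2.2.1, ps_tmul_one_left P hM] at hm
    simp only [ps_tmul_nsmul_left P hM] at hm
    have harch2 := ps_add_lt_right P harch (P.add (tmul P.zero c) (tmul P.zero d))
    exact (ps_asymm P hm) (ps_lt_ac P harch2 (by ac_rfl) (by ac_rfl))
  · by_cases hdc : P.lt d c
    · obtain ⟨n, harch⟩ := hA c (P.add (tmul a d) (tmul b c)) d
        (P.add (tmul a c) (tmul b d)) hpq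
      simp only [ps_nsmul_add] at harch
      have h1 : P.lt (P.nsmul n a) (P.add (P.nsmul n b) P.one) :=
        ps_lt_succ P (ps_nsmul_not_lt P hba n)
      have hm := hM.2.2.2.2.2 (P.add (P.nsmul n b) P.one) (P.nsmul n a) c d h1 hdc
      simp only [hM.2.2.1, ps_tmul_one_left P hM] at hm
      simp only [ps_tmul_nsmul_left P hM] at hm
      have harch2 := ps_add_lt_right P harch (P.add (tmul P.zero c) (tmul P.zero d))
      exact (ps_asymm P hm) (ps_lt_ac P harch2 (by ac_rfl) (by ac_rfl))
    · obtain ⟨n, harch⟩ := hA (P.add (P.add a P.one) P.one)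
        (P.add (tmul a d) (tmul b c)) b (P.add (tmul a c) (tmul b d)) hpq
      simp only [ps_nsmul_add] at harch
      have h1 : P.lt b (P.add a P.one) := ps_lt_succ P hab
      have h2 : P.lt (P.nsmul n c) (P.add (P.nsmul n d) P.one) :=
        ps_lt_succ P (ps_nsmul_not_lt P hdc n)
      have hm := hM.2.2.2.2.2 (P.add a P.one) b (P.add (P.nsmul n d) P.one)
        (P.nsmul n c) h1 h2
      simp only [hM.2.2.1, ps_tmul_add_right P hM, ps_tmul_one_left P hM,
        hM.2.2.2.1] at hm
      simp only [ps_tmul_nsmul_right P hM] at hm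
      have h3 : P.lt (P.nsmul n d) (P.add (P.nsmul n c) P.one) :=
        ps_lt_succ P (ps_nsmul_not_lt P hcd n)
      have h3' := ps_add_lt_right P h3
        (P.add (P.add (P.nsmul n (tmul a d)) (P.nsmul n (tmul b c)))
          (P.add a (P.add P.one (P.add (tmul a P.zero) (tmul b P.zero)))))
      have hc1 := ps_lt_trans P hm (ps_lt_ac P h3' (by ac_rfl) rfl)
      have harch2 := ps_add_lt_right P harch
        (P.add (P.nsmul n c) (P.add (tmul a P.zero) (tmul b P.zero)))
      have hc2 := ps_lt_trans P hc1 (ps_lt_ac P harch2 (by ac_rfl) rfl)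
      exact (ps_asymm P hc2) (ps_lt_ac P hc2 (by ac_rfl) (by ac_rfl))

end Aux

/-- In a multiplicative prestreak, `a # b` and `c # d` imply
`a·d + b·c # a·c + b·d`; in an archimedean one, the converse also holds. -/
theorem apartness_multiplicity {X : Type*} (P : Prestreak X)
    (tmul : X → X → X) (hM : P.IsMultiplicative tmul) (a b c d : X) :
    (P.Apart a b → P.Apart c d →
      P.Apart (P.add (tmul a d) (tmul b c)) (P.add (tmul a c) (tmul b d))) ∧
    (P.Archimedean →
      P.Apart (P.add (tmul a d) (tmul b c)) (P.add (tmul a c) (tmul b d)) →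
      P.Apart a b ∧ P.Apart c d) := by
  letI : Std.Associative P.add := ⟨P.add_assoc⟩
  letI : Std.Commutative P.add := ⟨P.add_comm⟩
  constructor
  · rintro (hab | hba) (hcd | hdc)
    · exact Or.inl (ps_lt_ac P (hM.2.2.2.2.2 b a d c hab hcd) (by ac_rfl) (by ac_rfl))
    · exact Or.inr (ps_lt_ac P (hM.2.2.2.2.2 b a c d hab hdc) (by ac_rfl) (by ac_rfl))
    · exact Or.inr (ps_lt_ac P (hM.2.2.2.2.2 a b d c hba hcd) (by ac_rfl) (by ac_rfl))
    · exact Or.inl (hM.2.2.2.2.2 a b c d hba hdc)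
  · intro hA hap
    have hab : P.Apart a b := by
      by_contra h
      rw [Prestreak.Apart, not_or] at h
      rcases hap with h1 | h1
      · exact ps_key P hM hA h.1 h.2 c d h1
      · exact ps_key P hM hA h.1 h.2 d c h1
    have hcd : P.Apart c d := by
      by_contra h
      rw [Prestreak.Apart, not_or] at h
      rcases hap with h1 | h1
      · apply ps_key P hM hA h.1 h.2 a b
        rw [hM.1 c b, hM.1 d a, hM.1 c a, hM.1 d b]
        exact ps_lt_ac P h1 (by ac_rfl) rfl
      · apply ps_key P hM hA h.1 h.2 b a
        rw [hM.1 c a, hM.1 d b, hM.1 c b, hM.1 d a]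
        exact ps_lt_ac P h1 rfl (by ac_rfl)
    exact ⟨hab, hcd⟩
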